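/- Let K be a field and h(x) ∈ K[x]. Suppose that among the coefficients of h corresponding to the powers x^j with j < n, at least k of them are equal to a common nonzero value. Then the polynomial h(x)(x^n − 1) has at least k nonzero coefficients in degrees ≥ n. -/

import Mathlib

open Polynomial

lemma stmt13_coeff {K : Type*} [Field K] (h : Polynomial K) (n : ℕ) (m : ℕ) (hm : n ≤ m) :
    (h * (Polynomial.X ^ n - 1)).coeff m = h.coeff (m - n) - h.coeff m := by
  rw [mul_sub, mul_one, Polynomial.coeff_sub, Polynomial.coeff_mul_X_pow', if_pos hm]

lemma stmt13_key {K : Type*} [Field K] (h : Polynomial K) (n : ℕ) (hn : 0 < n)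
    (j : ℕ) (hj : h.coeff j ≠ 0) :
    ∃ t, 1 ≤ t ∧ (h * (Polynomial.X ^ n - 1)).coeff (j + t * n) ≠ 0 := by
  by_contra hcon
  push_neg at hcon
  have key : ∀ t, h.coeff (j + t * n) = h.coeff j := by
    intro t
    induction t with
    | zero => simp
    | succ t ih =>
      have h1 := hcon (t + 1) (by omega)
      rw [stmt13_coeff h n _ (by nlinarith)] at h1
      have h2 : j + (t + 1) * n - n = j + t * n := by
        have : (t + 1) * n = t * n + n := by ring
        omega
      rw [h2] at h1
      have : h.coeff (j + (t + 1) * n) = h.coeff (j + t * n) := by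
        linear_combination -h1
      rw [this, ih]
  have hbig := key (h.natDegree + 1)
  have : h.coeff (j + (h.natDegree + 1) * n) = 0 :=
    Polynomial.coeff_eq_zero_of_natDegree_lt (by nlinarith)
  rw [hbig] at this
  exact hj this

/-- if among the coefficients of `h ∈ K[x]` of the powers `x^j`, `j < n`,
at least `k` are equal to a common nonzero value `c`, then `h(x)(x^n − 1)` has at least `k`
nonzero coefficients in degrees `≥ n`. -/
theorem stmt13 {K : Type*} [Field K] [DecidableEq K] (h : Polynomial K) (n k : ℕ)
    (hn : 0 < n) (hk : 0 < k) (c : K) (hc : c ≠ 0)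
    (hcount : k ≤ ((Finset.range n).filter (fun j => h.coeff j = c)).card) :
    k ≤ ((h * (Polynomial.X ^ n - 1)).support.filter (fun j => n ≤ j)).card := by
  classical
  set g := h * (Polynomial.X ^ n - 1) with hg
  set f : ℕ → ℕ := fun j =>
    if hj : ∃ t, 1 ≤ t ∧ g.coeff (j + t * n) ≠ 0 then j + (Nat.find hj) * n else 0 with hf
  refine le_trans hcount (Finset.card_le_card_of_injOn f ?_ ?_)
  · intro j hj
    simp only [Finset.mem_coe, Finset.mem_filter, Finset.mem_range] at hj
    have hex : ∃ t, 1 ≤ t ∧ g.coeff (j + t * n) ≠ 0 :=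
      stmt13_key h n hn j (by rw [hj.2]; exact hc)
    have hspec := Nat.find_spec hex
    simp only [hf, dif_pos hex, Finset.mem_coe, Finset.mem_filter, Polynomial.mem_support_iff]
    exact ⟨hspec.2, by nlinarith [hspec.1]⟩
  · intro j1 hj1 j2 hj2 heq
    simp only [Finset.mem_coe, Finset.mem_filter, Finset.mem_range] at hj1 hj2
    have hex1 : ∃ t, 1 ≤ t ∧ g.coeff (j1 + t * n) ≠ 0 :=
      stmt13_key h n hn j1 (by rw [hj1.2]; exact hc)
    have hex2 : ∃ t, 1 ≤ t ∧ g.coeff (j2 + t * n) ≠ 0 :=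
      stmt13_key h n hn j2 (by rw [hj2.2]; exact hc)
    simp only [hf, dif_pos hex1, dif_pos hex2] at heq
    have := congrArg (· % n) heq
    simpa [Nat.add_mul_mod_self_right, Nat.mod_eq_of_lt hj1.1, Nat.mod_eq_of_lt hj2.1] using this
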